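/- Let ζ > 0 and μ ∈ ℂ with Im μ > ζ, and define w_μ(α) := 2·Σ_{k∈ℤ} e^{|k|ζ} · sinh(|k|ζ) · e^{2i|k|μ} · e^{2ikα}, a series converging absolutely for real α. Then φ'(μ, ζ/2) + (1/(2π)) · ∫_{−π/2}^{π/2} φ'(β, ζ/2) · w_μ(β) dβ = 0; that is, the dressed energy of a wide root vanishes. -/

import Mathlib

/-- `φ'(ν, γ) = sinh(2γ)/(sin(ν+iγ) sin(ν−iγ))`. -/
noncomputable def phiP (ν : ℂ) (γ : ℝ) : ℂ :=
  Complex.sinh (2 * (γ : ℂ)) /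
    (Complex.sin (ν + Complex.I * (γ : ℂ)) * Complex.sin (ν - Complex.I * (γ : ℂ)))

/-- The Fourier-series correction to the counting function caused by a wide root `μ`:
`w_μ(α) = 2 Σ_{k∈ℤ} e^{|k|ζ} sinh(|k|ζ) e^{2i|k|μ} e^{2ikα}`. -/
noncomputable def wFun (ζ : ℝ) (μ : ℂ) (α : ℝ) : ℂ :=
  2 * ∑' k : ℤ, (Real.exp (|(k : ℝ)| * ζ) * Real.sinh (|(k : ℝ)| * ζ) : ℂ) *
      Complex.exp (2 * Complex.I * ((|(k : ℝ)| : ℝ) : ℂ) * μ) *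
      Complex.exp (2 * Complex.I * k * (α : ℂ))

open Complex MeasureTheory

namespace WRaux

/-! ### Algebraic helper lemmas -/

lemma algClosed (E q : ℂ) (hE : E ≠ 0) (hq : q ≠ 0)
    (h1 : 1 - E*q ≠ 0) (h2 : 1 - q/E ≠ 0) :
    ((E - E⁻¹)/2) / (((E + E⁻¹)/2 - (q + q⁻¹)/2)/2)
      = -2*(1/(1-E*q) - 1/(1-q/E)) := by
  have h2' : q - E ≠ 0 := by
    intro h; apply h2; field_simp; linear_combination -h
  have h3 : E - q ≠ 0 := fun h => h2' (by linear_combination -h)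
  have hD : (E + E⁻¹)/2 - (q + q⁻¹)/2 ≠ 0 := by
    have : (E + E⁻¹)/2 - (q + q⁻¹)/2 = (1 - E*q)*(q - E)/(2*E*q) := by
      field_simp; ring
    rw [this]
    exact div_ne_zero (mul_ne_zero h1 h2') (by simp [hE, hq])
  rw [div_div_eq_mul_div, div_eq_iff hD]
  field_simp
  ring

lemma denomEq (ζ : ℝ) (ν : ℂ) :
    Complex.sin (ν + Complex.I * ((ζ/2 : ℝ) : ℂ)) * Complex.sin (ν - Complex.I * ((ζ/2 : ℝ) : ℂ))
      = (Complex.cosh (ζ : ℂ) - Complex.cos (2*ν)) / 2 := by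
  have hprod : ∀ a b : ℂ, Complex.sin a * Complex.sin b
      = (Complex.cos (a - b) - Complex.cos (a + b)) / 2 := by
    intro a b; rw [Complex.cos_sub, Complex.cos_add]; ring
  rw [hprod]
  have h1 : ν + Complex.I * ((ζ/2 : ℝ) : ℂ) - (ν - Complex.I * ((ζ/2 : ℝ) : ℂ))
      = (ζ:ℂ) * Complex.I := by push_cast; ring
  have h2 : ν + Complex.I * ((ζ/2 : ℝ) : ℂ) + (ν - Complex.I * ((ζ/2 : ℝ) : ℂ)) = 2*ν := by
    push_cast; ring
  rw [h1, h2, Complex.cos_mul_I]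

lemma phiP_closed (ζ : ℝ) (ν : ℂ)
    (h1 : 1 - Complex.exp ζ * Complex.exp (2*Complex.I*ν) ≠ 0)
    (h2 : 1 - Complex.exp (2*Complex.I*ν) / Complex.exp ζ ≠ 0) :
    phiP ν (ζ/2) = -2 * (1/(1 - Complex.exp ζ * Complex.exp (2*Complex.I*ν))
      - 1/(1 - Complex.exp (2*Complex.I*ν) / Complex.exp ζ)) := by
  have hcast : 2 * ((ζ/2 : ℝ) : ℂ) = (ζ : ℂ) := by push_cast; ring
  unfold phiP
  rw [hcast, denomEq, Complex.sinh, Complex.cosh, Complex.cos, Complex.exp_neg]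
  have e1 : Complex.exp (2*ν*Complex.I) = Complex.exp (2*Complex.I*ν) := by ring_nf
  have e2 : Complex.exp (-(2*ν)*Complex.I) = (Complex.exp (2*Complex.I*ν))⁻¹ := by
    rw [show -(2*ν)*Complex.I = -(2*Complex.I*ν) by ring, Complex.exp_neg]
  rw [e1, e2]
  exact algClosed _ _ (Complex.exp_ne_zero _) (Complex.exp_ne_zero _) h1 h2

lemma one_sub_ne (w : ℂ) (h : ‖w‖ ≠ 1) : 1 - w ≠ 0 := by
  intro hw
  rw [sub_eq_zero] at hw
  apply h
  rw [← hw]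
  simp

/-! ### Real form, bound, continuity of `phiP` on the real line -/

lemma phiP_real (ζ : ℝ) (β : ℝ) :
    phiP (β:ℂ) (ζ/2) = ((Real.sinh ζ * 2 / (Real.cosh ζ - Real.cos (2*β)) : ℝ) : ℂ) := by
  have hcast : 2 * ((ζ/2 : ℝ) : ℂ) = (ζ : ℂ) := by push_cast; ring
  unfold phiP
  rw [hcast, denomEq]
  rw [show 2*(β:ℂ) = ((2*β : ℝ) : ℂ) by push_cast; ring]
  rw [← Complex.ofReal_cos, ← Complex.ofReal_cosh, ← Complex.ofReal_sinh]
  rw [div_div_eq_mul_div]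
  push_cast
  ring

lemma cosh_sub_cos_pos (ζ : ℝ) (hζ : 0 < ζ) (x : ℝ) : 0 < Real.cosh ζ - Real.cos x := by
  have h1 : 1 < Real.cosh ζ := (Real.one_lt_cosh).2 (ne_of_gt hζ)
  have h2 : Real.cos x ≤ 1 := Real.cos_le_one x
  linarith

lemma phiP_bound (ζ : ℝ) (hζ : 0 < ζ) (β : ℝ) :
    ‖phiP (β:ℂ) (ζ/2)‖ ≤ Real.sinh ζ * 2 / (Real.cosh ζ - 1) := by
  rw [phiP_real, Complex.norm_real]
  have h1 : 1 < Real.cosh ζ := (Real.one_lt_cosh).2 (ne_of_gt hζ)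
  have h2 := cosh_sub_cos_pos ζ hζ (2*β)
  have hs : 0 ≤ Real.sinh ζ * 2 := by positivity
  rw [Real.norm_eq_abs, _root_.abs_of_nonneg (by positivity)]
  apply div_le_div_of_nonneg_left hs (by linarith)
  linarith [Real.cos_le_one (2*β)]

lemma phiP_cont (ζ : ℝ) (hζ : 0 < ζ) : Continuous fun β : ℝ => phiP (β:ℂ) (ζ/2) := by
  have : (fun β : ℝ => phiP (β:ℂ) (ζ/2))
      = fun β : ℝ => ((Real.sinh ζ * 2 / (Real.cosh ζ - Real.cos (2*β)) : ℝ) : ℂ) := by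
    funext β; exact phiP_real ζ β
  rw [this]
  apply Complex.continuous_ofReal.comp
  apply Continuous.div continuous_const (by continuity)
  exact fun x => ne_of_gt (cosh_sub_cos_pos ζ hζ (2*x))

/-! ### `ℤ`-summation helpers -/

lemma hasSum_natAbs {f : ℕ → ℂ} {s : ℂ} (h : HasSum f s) (h0 : f 0 = 0) :
    HasSum (fun k : ℤ => f k.natAbs) (2*s) := by
  have hpos : HasSum (fun n : ℕ => f ((n:ℤ)).natAbs) s := by
    have heq : (fun n : ℕ => f ((n:ℤ)).natAbs) = f := by
      funext n; rw [show ((n:ℤ)).natAbs = n by omega]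
    rw [heq]; exact h
  have hneg : HasSum (fun n : ℕ => f ((-((n:ℤ)+1))).natAbs) s := by
    have h1 : HasSum (fun n : ℕ => f (n+1)) (s - ∑ i ∈ Finset.range 1, f i) :=
      (hasSum_nat_add_iff' 1).mpr h
    simp only [Finset.range_one, Finset.sum_singleton, h0, sub_zero] at h1
    have heq : (fun n : ℕ => f ((-((n:ℤ)+1))).natAbs) = fun n : ℕ => f (n+1) := by
      funext n; rw [show ((-((n:ℤ)+1))).natAbs = n+1 by omega]
    rw [heq]
    exact h1
  have := HasSum.of_nat_of_neg_add_one (f := fun k : ℤ => f k.natAbs) hpos hneg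
  simpa [two_mul] using this

lemma summable_pow_natAbs (t : ℝ) (h0 : 0 ≤ t) (h1 : t < 1) :
    Summable (fun k : ℤ => t ^ k.natAbs) := by
  apply Summable.of_nat_of_neg_add_one
  · have heq : (fun n : ℕ => t ^ ((n:ℤ)).natAbs) = fun n : ℕ => t ^ n := by
      funext n; rw [show ((n:ℤ)).natAbs = n by omega]
    rw [heq]; exact summable_geometric_of_lt_one h0 h1
  · have heq : (fun n : ℕ => t ^ ((-((n:ℤ)+1))).natAbs) = fun n : ℕ => t ^ n * t := by
      funext n; rw [show ((-((n:ℤ)+1))).natAbs = n+1 by omega, pow_succ]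
    rw [heq]
    exact (summable_geometric_of_lt_one h0 h1).mul_right t

lemma sinh_nonneg' {x : ℝ} (hx : 0 ≤ x) : 0 ≤ Real.sinh x := by
  rw [Real.sinh_eq]
  have h : Real.exp (-x) ≤ Real.exp x := Real.exp_le_exp.mpr (by linarith)
  linarith

/-! ### Norm computations -/

lemma norm_exp_two_I (c : ℝ) (μ : ℂ) :
    ‖Complex.exp (2*Complex.I*(c:ℂ)*μ)‖ = Real.exp (-(2*c*μ.im)) := by
  rw [Complex.norm_exp]
  congr 1
  simp [Complex.mul_re, Complex.mul_im]

lemma norm_exp_int_I (k : ℤ) (β : ℝ) : ‖Complex.exp (2*Complex.I*(k:ℂ)*(β:ℂ))‖ = 1 := by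
  rw [Complex.norm_exp]
  simp [Complex.mul_re, Complex.mul_im]

lemma norm_exp_ofReal (ζ : ℝ) : ‖Complex.exp (ζ:ℂ)‖ = Real.exp ζ := by
  rw [Complex.norm_exp]; simp

lemma norm_Eq_lt (ζ : ℝ) (μ : ℂ) (hζ : 0 < ζ) (hμ : ζ < μ.im) :
    ‖Complex.exp (ζ:ℂ) * Complex.exp (2*Complex.I*μ)‖ < 1 := by
  have hnq : ‖Complex.exp (2*Complex.I*μ)‖ = Real.exp (-(2*μ.im)) := by
    simpa using norm_exp_two_I 1 μ
  rw [norm_mul, norm_exp_ofReal, hnq, ← Real.exp_add, Real.exp_lt_one_iff]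
  linarith

lemma norm_qE_lt (ζ : ℝ) (μ : ℂ) (hζ : 0 < ζ) (hμ : ζ < μ.im) :
    ‖Complex.exp (2*Complex.I*μ) / Complex.exp (ζ:ℂ)‖ < 1 := by
  have hnq : ‖Complex.exp (2*Complex.I*μ)‖ = Real.exp (-(2*μ.im)) := by
    simpa using norm_exp_two_I 1 μ
  rw [norm_div, norm_exp_ofReal, hnq, div_eq_mul_inv, ← Real.exp_neg, ← Real.exp_add,
    Real.exp_lt_one_iff]
  linarith

/-! ### The wide-root sum (Lemma B) -/

lemma hasSum_sinh (ζ : ℝ) (μ : ℂ) (hζ : 0 < ζ) (hμ : ζ < μ.im) :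
    HasSum (fun n : ℕ => (Real.sinh (n*ζ) : ℂ) * Complex.exp (2*Complex.I*(n:ℂ)*μ))
      (((1 - Complex.exp ζ * Complex.exp (2*Complex.I*μ))⁻¹
        - (1 - Complex.exp (2*Complex.I*μ) / Complex.exp ζ)⁻¹)/2) := by
  set E : ℂ := Complex.exp ζ with hE
  set q : ℂ := Complex.exp (2*Complex.I*μ) with hq
  have h1 : ‖E*q‖ < 1 := norm_Eq_lt ζ μ hζ hμ
  have h2 : ‖q/E‖ < 1 := norm_qE_lt ζ μ hζ hμ
  have g1 := hasSum_geometric_of_norm_lt_one h1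
  have g2 := hasSum_geometric_of_norm_lt_one h2
  have g3 := (g1.sub g2).div_const 2
  have heq : (fun n : ℕ => ((E*q)^n - (q/E)^n)/2)
      = fun n : ℕ => (Real.sinh (n*ζ) : ℂ) * Complex.exp (2*Complex.I*(n:ℂ)*μ) := by
    funext n
    have hEn : Complex.exp ((n:ℂ)*(ζ:ℂ)) = E^n := by
      rw [hE, ← Complex.exp_nat_mul]
    have hqn : Complex.exp (2*Complex.I*(n:ℂ)*μ) = q^n := by
      rw [hq, ← Complex.exp_nat_mul]
      congr 1; ring
    have hsinh : (Real.sinh (n*ζ) : ℂ) = (E^n - (E^n)⁻¹)/2 := by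
      rw [Complex.ofReal_sinh, Complex.sinh, ← hEn, ← Complex.exp_neg]
      push_cast
      ring_nf
    rw [hsinh, hqn, mul_pow, div_pow]
    have hEn0 : E^n ≠ 0 := pow_ne_zero n (Complex.exp_ne_zero _)
    field_simp
  rw [← heq]
  exact g3

lemma phiP_mu (ζ : ℝ) (hζ : 0 < ζ) (μ : ℂ) (hμ : ζ < μ.im) :
    phiP μ (ζ/2)
      = -4 * (((1 - Complex.exp ζ * Complex.exp (2*Complex.I*μ))⁻¹
        - (1 - Complex.exp (2*Complex.I*μ) / Complex.exp ζ)⁻¹)/2) := by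
  have h1 : 1 - Complex.exp ζ * Complex.exp (2*Complex.I*μ) ≠ 0 :=
    one_sub_ne _ (ne_of_lt (norm_Eq_lt ζ μ hζ hμ))
  have h2 : 1 - Complex.exp (2*Complex.I*μ) / Complex.exp ζ ≠ 0 :=
    one_sub_ne _ (ne_of_lt (norm_qE_lt ζ μ hζ hμ))
  rw [phiP_closed ζ μ h1 h2]
  simp only [one_div]
  ring

/-! ### The Fourier series of `phiP` on the real line (Lemma A) -/

lemma alg2 (E z : ℂ) (hE : E ≠ 0) (hz : z ≠ 0)
    (h1 : 1-E*z ≠ 0) (h2 : 1-z/E ≠ 0) (h4 : 1-E⁻¹*z⁻¹ ≠ 0) :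
    -2*(1/(1-E*z) - 1/(1-z/E)) = 2*(1-E⁻¹*z)⁻¹ + 2*((E⁻¹*z⁻¹)*(1-E⁻¹*z⁻¹)⁻¹) := by
  have h2' : E - z ≠ 0 := by
    intro h
    apply h2
    rw [← sub_eq_zero.mp h, div_self hE, sub_self]
  have h5 : E*z - 1 ≠ 0 := by
    intro h; apply h1; linear_combination -h
  field_simp
  ring

lemma hasSum_phiP_fourier (ζ : ℝ) (hζ : 0 < ζ) (β : ℝ) :
    HasSum (fun n : ℤ => 2*((Real.exp (-ζ) : ℂ))^n.natAbs * Complex.exp (2*Complex.I*(n:ℂ)*(β:ℂ)))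
      (phiP (β:ℂ) (ζ/2)) := by
  set z : ℂ := Complex.exp (2*Complex.I*(β:ℂ)) with hzdef
  have hz1 : ‖z‖ = 1 := by
    rw [hzdef, Complex.norm_exp]
    simp [Complex.mul_re, Complex.mul_im]
  have hz0 : z ≠ 0 := Complex.exp_ne_zero _
  set r : ℝ := Real.exp (-ζ) with hrdef
  have hr0 : 0 < r := Real.exp_pos _
  have hr1 : r < 1 := by rw [hrdef, Real.exp_lt_one_iff]; linarith
  have hrz : ‖(r:ℂ)*z‖ < 1 := by
    rw [norm_mul, hz1, Complex.norm_real, Real.norm_eq_abs, abs_of_pos hr0, mul_one]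
    exact hr1
  have hrzi : ‖(r:ℂ)*z⁻¹‖ < 1 := by
    rw [norm_mul, norm_inv, hz1, Complex.norm_real, Real.norm_eq_abs, abs_of_pos hr0]
    simpa using hr1
  have pos0 := (hasSum_geometric_of_norm_lt_one hrz).mul_left 2
  have neg0 := (hasSum_geometric_of_norm_lt_one hrzi).mul_left (2*((r:ℂ)*z⁻¹))
  have hposf : (fun n : ℕ => 2*((r:ℂ)*z)^n)
      = fun n : ℕ => 2*((r:ℂ))^(((n:ℤ)).natAbs) * Complex.exp (2*Complex.I*(((n:ℤ)):ℂ)*(β:ℂ)) := by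
    funext n
    rw [show ((n:ℤ)).natAbs = n by omega]
    have he : Complex.exp (2*Complex.I*(((n:ℤ)):ℂ)*(β:ℂ)) = z^n := by
      rw [hzdef, ← Complex.exp_nat_mul]; congr 1; push_cast; ring
    rw [he, mul_pow]; ring
  have hnegf : (fun n : ℕ => 2*((r:ℂ)*z⁻¹)*((r:ℂ)*z⁻¹)^n)
      = fun n : ℕ => 2*((r:ℂ))^((-((n:ℤ)+1)).natAbs)
          * Complex.exp (2*Complex.I*(((-((n:ℤ)+1) : ℤ)):ℂ)*(β:ℂ)) := by
    funext n
    rw [show (-((n:ℤ)+1)).natAbs = n+1 by omega]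
    have he : Complex.exp (2*Complex.I*(((-((n:ℤ)+1) : ℤ)):ℂ)*(β:ℂ)) = (z⁻¹)^(n+1) := by
      rw [hzdef, ← Complex.exp_neg, ← Complex.exp_nat_mul]
      congr 1; push_cast; ring
    rw [he, mul_pow, pow_succ]; ring
  rw [hposf] at pos0
  rw [hnegf] at neg0
  have hsum := HasSum.of_nat_of_neg_add_one
    (f := fun n : ℤ => 2*((r:ℂ))^n.natAbs * Complex.exp (2*Complex.I*(n:ℂ)*(β:ℂ))) pos0 neg0
  convert hsum using 1
  -- value equality
  have hE0 : Complex.exp ((ζ:ℝ):ℂ) ≠ 0 := Complex.exp_ne_zero _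
  have hrE : (r:ℂ) = (Complex.exp ((ζ:ℝ):ℂ))⁻¹ := by
    rw [hrdef, Complex.ofReal_exp, ← Complex.exp_neg]
    norm_num
  have hnE : ‖Complex.exp ((ζ:ℝ):ℂ)‖ = Real.exp ζ := norm_exp_ofReal ζ
  have hζ1 : Real.exp ζ ≠ 1 := by
    intro h
    rw [Real.exp_eq_one_iff] at h
    linarith
  have h1 : 1 - Complex.exp ((ζ:ℝ):ℂ) * z ≠ 0 := by
    apply one_sub_ne
    rw [norm_mul, hnE, hz1, mul_one]
    exact hζ1
  have h2 : 1 - z / Complex.exp ((ζ:ℝ):ℂ) ≠ 0 := by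
    apply one_sub_ne
    rw [norm_div, hnE, hz1]
    intro h
    rw [div_eq_one_iff_eq (by positivity)] at h
    exact hζ1 h.symm
  have h4 : 1 - (Complex.exp ((ζ:ℝ):ℂ))⁻¹ * z⁻¹ ≠ 0 := by
    apply one_sub_ne
    rw [norm_mul, norm_inv, norm_inv, hnE, hz1]
    intro h
    simp only [inv_one, mul_one] at h
    rw [inv_eq_one] at h
    exact hζ1 h
  rw [phiP_closed ζ (β:ℂ) h1 h2]
  rw [← hzdef, hrE]
  have halg := alg2 (Complex.exp ((ζ:ℝ):ℂ)) z hE0 hz0 h1 h2 h4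
  linear_combination halg

/-! ### Integrals -/

lemma intExp (m : ℤ) :
    (∫ β in Set.Ioc (-(Real.pi/2)) (Real.pi/2), Complex.exp (2*Complex.I*(m:ℂ)*(β:ℂ)))
      = if m = 0 then (Real.pi:ℂ) else 0 := by
  have hπ : (0:ℝ) < Real.pi := Real.pi_pos
  have hab : -(Real.pi/2) ≤ Real.pi/2 := by linarith
  rw [← intervalIntegral.integral_of_le hab]
  by_cases hm : m = 0
  · subst hm
    rw [if_pos rfl]
    simp only [Int.cast_zero, mul_zero, zero_mul, Complex.exp_zero]
    rw [intervalIntegral.integral_const, Complex.real_smul, mul_one]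
    push_cast
    ring
  · rw [if_neg hm]
    have hc : (2*Complex.I*(m:ℂ)) ≠ 0 := by
      apply mul_ne_zero (mul_ne_zero two_ne_zero Complex.I_ne_zero)
      exact_mod_cast hm
    rw [integral_exp_mul_complex hc]
    rw [div_eq_zero_iff]
    left
    have hs : Complex.sin ((m:ℂ)*(Real.pi:ℂ)) = 0 := Complex.sin_int_mul_pi m
    rw [Complex.sin] at hs
    have hd : Complex.exp (-((m:ℂ)*(Real.pi:ℂ))*Complex.I) - Complex.exp ((m:ℂ)*(Real.pi:ℂ)*Complex.I) = 0 := by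
      linear_combination (-2*Complex.I)*hs
        + (Complex.exp (-((m:ℂ)*(Real.pi:ℂ))*Complex.I) - Complex.exp ((m:ℂ)*(Real.pi:ℂ)*Complex.I))*Complex.I_sq
    have e1 : 2*Complex.I*(m:ℂ)*((Real.pi/2 : ℝ):ℂ) = (m:ℂ)*(Real.pi:ℂ)*Complex.I := by
      push_cast; ring
    have e2 : 2*Complex.I*(m:ℂ)*((-(Real.pi/2) : ℝ):ℂ) = -((m:ℂ)*(Real.pi:ℂ))*Complex.I := by
      push_cast; ring
    rw [e1, e2]
    linear_combination -hd

lemma contExp (c : ℂ) : Continuous fun β : ℝ => Complex.exp (c*(β:ℂ)) :=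
  Complex.continuous_exp.comp (continuous_const.mul Complex.continuous_ofReal)

lemma volIoc : (MeasureTheory.volume (Set.Ioc (-(Real.pi/2)) (Real.pi/2))).toReal = Real.pi := by
  rw [Real.volume_Ioc, ENNReal.toReal_ofReal (by linarith [Real.pi_pos])]
  ring

lemma phiP_fourier_coeff (ζ : ℝ) (hζ : 0 < ζ) (k : ℤ) :
    (∫ β in Set.Ioc (-(Real.pi/2)) (Real.pi/2),
        phiP (β:ℂ) (ζ/2) * Complex.exp (2*Complex.I*(k:ℂ)*(β:ℂ)))
      = 2*(Real.pi:ℂ)*((Real.exp (-ζ):ℂ))^k.natAbs := by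
  set r : ℝ := Real.exp (-ζ) with hrdef
  have hr0 : 0 < r := Real.exp_pos _
  have hr1 : r < 1 := by rw [hrdef, Real.exp_lt_one_iff]; linarith
  set G : ℤ → ℝ → ℂ := fun n β =>
    (2*((r:ℂ))^n.natAbs * Complex.exp (2*Complex.I*(n:ℂ)*(β:ℂ)))
      * Complex.exp (2*Complex.I*(k:ℂ)*(β:ℂ)) with hGdef
  have hpt : ∀ β:ℝ, phiP (β:ℂ) (ζ/2) * Complex.exp (2*Complex.I*(k:ℂ)*(β:ℂ))
      = ∑' n:ℤ, G n β := by
    intro β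
    rw [← (hasSum_phiP_fourier ζ hζ β).tsum_eq, ← tsum_mul_right]
  simp only [hpt]
  have hcont : ∀ n : ℤ, Continuous (G n) := by
    intro n
    apply Continuous.mul _ (contExp _)
    exact continuous_const.mul (contExp _)
  have hint : ∀ n : ℤ, MeasureTheory.Integrable (G n)
      (MeasureTheory.volume.restrict (Set.Ioc (-(Real.pi/2)) (Real.pi/2))) := by
    intro n
    exact (hcont n).integrableOn_Ioc
  have hGnorm : ∀ n : ℤ, (fun β : ℝ => ‖G n β‖) = fun _ : ℝ => 2*r^n.natAbs := by
    intro n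
    funext β
    rw [hGdef]
    simp only [norm_mul]
    rw [norm_exp_int_I, norm_exp_int_I, norm_pow, Complex.norm_real, Real.norm_eq_abs,
      abs_of_pos hr0]
    norm_num
  have hnormint : ∀ n : ℤ, (∫ β in Set.Ioc (-(Real.pi/2)) (Real.pi/2), ‖G n β‖)
      = Real.pi * (2*r^n.natAbs) := by
    intro n
    rw [hGnorm n, MeasureTheory.setIntegral_const, MeasureTheory.measureReal_def, volIoc, smul_eq_mul]
  have hsumnorm : Summable fun n : ℤ =>
      (∫ β in Set.Ioc (-(Real.pi/2)) (Real.pi/2), ‖G n β‖) := by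
    simp only [hnormint]
    exact (summable_pow_natAbs r (le_of_lt hr0) hr1).mul_left (Real.pi * 2) |>.congr
      (fun n => by ring)
  rw [← MeasureTheory.integral_tsum_of_summable_integral_norm hint hsumnorm]
  have hGint : ∀ n : ℤ, (∫ β in Set.Ioc (-(Real.pi/2)) (Real.pi/2), G n β)
      = (2*((r:ℂ))^n.natAbs) * (if n + k = 0 then (Real.pi:ℂ) else 0) := by
    intro n
    have hGn : ∀ β : ℝ, G n β
        = (2*((r:ℂ))^n.natAbs) * Complex.exp (2*Complex.I*(((n+k : ℤ)):ℂ)*(β:ℂ)) := by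
      intro β
      rw [hGdef]
      simp only []
      rw [mul_assoc, ← Complex.exp_add]
      congr 2
      push_cast
      ring
    simp only [hGn]
    rw [MeasureTheory.integral_const_mul, intExp (n+k)]
  simp only [hGint]
  rw [tsum_eq_single (-k) ?_]
  · rw [if_pos (by ring), Int.natAbs_neg]
    ring
  · intro n hn
    rw [if_neg (by omega), mul_zero]

end WRaux

open WRaux

/-- The dressed energy of a wide root vanishes: for `ζ > 0` and `Im μ > ζ`,
`φ'(μ, ζ/2) + (1/(2π)) ∫_{−π/2}^{π/2} φ'(β, ζ/2) w_μ(β) dβ = 0`. -/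
theorem wide_root_dressed_energy_vanishes
    (ζ : ℝ) (hζ : 0 < ζ) (μ : ℂ) (hμ : ζ < μ.im) :
    phiP μ (ζ / 2) +
        (1 / (2 * (Real.pi : ℂ))) *
          ∫ β in (-(Real.pi / 2))..(Real.pi / 2), phiP (β : ℂ) (ζ / 2) * wFun ζ μ β
      = 0 := by
  classical
  have hπ : (0:ℝ) < Real.pi := Real.pi_pos
  have hab : -(Real.pi/2) ≤ Real.pi/2 := by linarith
  set c : ℤ → ℂ := fun k => (Real.exp (|(k : ℝ)| * ζ) * Real.sinh (|(k : ℝ)| * ζ) : ℂ) *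
      Complex.exp (2 * Complex.I * ((|(k : ℝ)| : ℝ) : ℂ) * μ) with hcdef
  have hwf : ∀ β:ℝ, wFun ζ μ β
      = 2 * ∑' k:ℤ, c k * Complex.exp (2*Complex.I*(k:ℂ)*(β:ℂ)) := by
    intro β
    unfold wFun
    simp only [hcdef]
  set F : ℤ → ℝ → ℂ := fun k β =>
    (2 * c k) * (phiP (β:ℂ) (ζ/2) * Complex.exp (2*Complex.I*(k:ℂ)*(β:ℂ))) with hFdef
  have hpt : ∀ β:ℝ, phiP (β:ℂ) (ζ/2) * wFun ζ μ β = ∑' k:ℤ, F k β := by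
    intro β
    have h1 : ∀ k : ℤ, F k β
        = (phiP (β:ℂ) (ζ/2) * 2) * (c k * Complex.exp (2*Complex.I*(k:ℂ)*(β:ℂ))) := by
      intro k; rw [hFdef]; ring
    calc phiP (β:ℂ) (ζ/2) * wFun ζ μ β
        = (phiP (β:ℂ) (ζ/2) * 2)
            * ∑' k:ℤ, c k * Complex.exp (2*Complex.I*(k:ℂ)*(β:ℂ)) := by rw [hwf β]; ring
      _ = ∑' k:ℤ, (phiP (β:ℂ) (ζ/2) * 2)
            * (c k * Complex.exp (2*Complex.I*(k:ℂ)*(β:ℂ))) := (tsum_mul_left).symm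
      _ = ∑' k:ℤ, F k β := by exact tsum_congr (fun k => (h1 k).symm)
  -- bounds
  set M : ℝ := Real.sinh ζ * 2 / (Real.cosh ζ - 1) with hMdef
  have hM0 : 0 ≤ M := by
    apply div_nonneg
    · have := sinh_nonneg' (le_of_lt hζ); linarith
    · have := (Real.one_lt_cosh).2 (ne_of_gt hζ); linarith
  set t : ℝ := Real.exp (2*(ζ - μ.im)) with htdef
  have ht0 : 0 ≤ t := le_of_lt (Real.exp_pos _)
  have ht1 : t < 1 := by rw [htdef, Real.exp_lt_one_iff]; linarith
  have habs : ∀ k : ℤ, |(k:ℝ)| = ((k.natAbs : ℕ) : ℝ) := by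
    intro k
    rw [Nat.cast_natAbs, Int.cast_abs]
  have hcnorm : ∀ k : ℤ, ‖c k‖ ≤ t^k.natAbs / 2 := by
    intro k
    simp only [hcdef]
    rw [habs k]
    set m : ℝ := ((k.natAbs : ℕ) : ℝ) with hmdef
    have hm0 : 0 ≤ m := Nat.cast_nonneg _
    simp only [norm_mul, Complex.norm_real]
    rw [norm_exp_two_I m μ]
    rw [Real.norm_eq_abs, Real.norm_eq_abs, Real.abs_exp,
      _root_.abs_of_nonneg (sinh_nonneg' (mul_nonneg hm0 hζ.le))]
    have hsinh : Real.sinh (m*ζ) ≤ Real.exp (m*ζ) / 2 := by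
      rw [Real.sinh_eq]
      have := Real.exp_pos (-(m*ζ))
      linarith
    have hchain : Real.exp (m*ζ) * Real.sinh (m*ζ) * Real.exp (-(2*m*μ.im))
        ≤ Real.exp (m*ζ) * (Real.exp (m*ζ)/2) * Real.exp (-(2*m*μ.im)) := by
      apply mul_le_mul_of_nonneg_right _ (le_of_lt (Real.exp_pos _))
      exact mul_le_mul_of_nonneg_left hsinh (le_of_lt (Real.exp_pos _))
    apply le_trans hchain
    have hexp : Real.exp (m*ζ) * (Real.exp (m*ζ)/2) * Real.exp (-(2*m*μ.im))
        = Real.exp (m*(2*(ζ - μ.im))) / 2 := by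
      have h1 : Real.exp (m*ζ) * Real.exp (m*ζ) * Real.exp (-(2*m*μ.im))
          = Real.exp (m*(2*(ζ - μ.im))) := by
        rw [← Real.exp_add, ← Real.exp_add]
        congr 1
        ring
      linear_combination (1/2)*h1
    rw [hexp, htdef, hmdef, ← Real.exp_nat_mul]
  have hFcont : ∀ k : ℤ, Continuous (F k) := by
    intro k
    exact continuous_const.mul ((phiP_cont ζ hζ).mul (contExp _))
  have hFint : ∀ k : ℤ, MeasureTheory.Integrable (F k)
      (MeasureTheory.volume.restrict (Set.Ioc (-(Real.pi/2)) (Real.pi/2))) :=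
    fun k => (hFcont k).integrableOn_Ioc
  have hFptbd : ∀ k : ℤ, ∀ β : ℝ, ‖F k β‖ ≤ t^k.natAbs * M := by
    intro k β
    have hFn : ‖F k β‖ = 2 * ‖c k‖ * ‖phiP (β:ℂ) (ζ/2)‖ := by
      simp only [hFdef, norm_mul, norm_exp_int_I, mul_one]
      norm_num
    rw [hFn]
    have hb1 : 2 * ‖c k‖ ≤ t^k.natAbs := by
      have := hcnorm k; linarith
    have hb2 : ‖phiP (β:ℂ) (ζ/2)‖ ≤ M := phiP_bound ζ hζ β
    exact mul_le_mul hb1 hb2 (norm_nonneg _) (by positivity)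
  have hFnormint : ∀ k : ℤ, (∫ β in Set.Ioc (-(Real.pi/2)) (Real.pi/2), ‖F k β‖)
      ≤ Real.pi * (t^k.natAbs * M) := by
    intro k
    have hle := MeasureTheory.integral_mono ((hFint k).norm)
      (MeasureTheory.integrable_const (t^k.natAbs * M)) (fun β => hFptbd k β)
    rw [MeasureTheory.setIntegral_const, MeasureTheory.measureReal_def, volIoc, smul_eq_mul] at hle
    exact hle
  have hsumnorm : Summable fun k : ℤ =>
      (∫ β in Set.Ioc (-(Real.pi/2)) (Real.pi/2), ‖F k β‖) := by
    apply Summable.of_nonneg_of_le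
      (fun k => MeasureTheory.integral_nonneg (fun β => norm_nonneg _)) hFnormint
    exact ((summable_pow_natAbs t ht0 ht1).mul_left Real.pi |>.mul_right M).congr
      (fun k => by ring)
  -- rewrite the integral
  rw [intervalIntegral.integral_of_le hab]
  simp only [hpt]
  rw [← MeasureTheory.integral_tsum_of_summable_integral_norm hFint hsumnorm]
  have hFk : ∀ k : ℤ, (∫ β in Set.Ioc (-(Real.pi/2)) (Real.pi/2), F k β)
      = (2 * c k) * (2*(Real.pi:ℂ)*((Real.exp (-ζ):ℂ))^k.natAbs) := by
    intro k
    simp only [hFdef]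
    rw [MeasureTheory.integral_const_mul, phiP_fourier_coeff ζ hζ k]
  simp only [hFk]
  -- identify terms
  set f : ℕ → ℂ := fun n => (Real.sinh (n*ζ) : ℂ) * Complex.exp (2*Complex.I*(n:ℂ)*μ) with hfdef
  have hterm : ∀ k : ℤ, (2 * c k) * (2*(Real.pi:ℂ)*((Real.exp (-ζ):ℂ))^k.natAbs)
      = (4*(Real.pi:ℂ)) * f k.natAbs := by
    intro k
    simp only [hcdef, hfdef]
    rw [habs k]
    have hcancel : (Real.exp (((k.natAbs:ℕ):ℝ) * ζ) : ℂ) * ((Real.exp (-ζ) : ℂ))^k.natAbs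
        = 1 := by
      rw [← Complex.ofReal_pow, ← Real.exp_nat_mul, ← Complex.ofReal_mul, ← Real.exp_add]
      rw [show ((k.natAbs:ℕ):ℝ) * ζ + ((k.natAbs:ℕ):ℝ) * (-ζ) = 0 by ring, Real.exp_zero,
        Complex.ofReal_one]
    have : (((k.natAbs:ℕ):ℝ) : ℂ) = ((k.natAbs:ℕ) : ℂ) := by push_cast; ring
    rw [this]
    linear_combination (2*(Real.pi:ℂ)*2*(Real.sinh (((k.natAbs:ℕ):ℝ)*ζ) : ℂ)
      * Complex.exp (2*Complex.I*((k.natAbs:ℕ):ℂ)*μ)) * hcancel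
  simp only [hterm]
  -- sum it up
  set S : ℂ := ((1 - Complex.exp ζ * Complex.exp (2*Complex.I*μ))⁻¹
        - (1 - Complex.exp (2*Complex.I*μ) / Complex.exp ζ)⁻¹)/2 with hSdef
  have hf0 : f 0 = 0 := by
    rw [hfdef]
    norm_num
  have hsumf : HasSum (fun k : ℤ => (4*(Real.pi:ℂ)) * f k.natAbs) ((4*(Real.pi:ℂ)) * (2*S)) := by
    exact (hasSum_natAbs (hasSum_sinh ζ μ hζ hμ) hf0).mul_left _
  rw [hsumf.tsum_eq]
  rw [phiP_mu ζ hζ μ hμ, ← hSdef]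
  have hπne : ((Real.pi:ℝ):ℂ) ≠ 0 := Complex.ofReal_ne_zero.mpr (ne_of_gt hπ)
  field_simp
  ring
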